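/- arXiv:1307.4330 — 4 statements merged into one kernel-verified Lean document; each statement's English description precedes it below -/
import Mathlib

section
/- (Weak-intrusivity property.) Suppose there exist real coefficients γ_{l,k}, 1 ≤ l, k ≤ d, such that q_k(x) = Σ_{l=1}^d γ_{l,k} g(μ_l, x) for every 1 ≤ k ≤ d and every x ∈ Ω, and define η_m(μ) := Σ_{l=1}^d γ_{m,l} λ_l(μ). Then for every μ ∈ P, Σ_{m=1}^d λ_m(μ) M_m = Σ_{m=1}^d η_m(μ) A^1_{μ_m}; in particular, for P ⊆ ℝ and any fixed n×n real matrix A^0, Σ_{m=1}^d λ_m(μ) M_m + μ A^0 = Σ_{m=1}^d η_m(μ) A^1_{μ_m} + μ A^0, i.e. the EIM approximation of A_μ = A^1_μ + μ A^0 can be written using only the assembled matrices A^1_{μ_m} at the selected parameters. -/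
/-- Weak-intrusivity property: the EIM approximation `Σ_m λ_m(μ) M_m` of `A¹_μ` can be
rewritten as `Σ_m η_m(μ) A¹_{μ_m}` using only assembled matrices at the selected
parameters; in particular (for `P ⊆ ℝ`) the approximation of `A_μ = A¹_μ + μ A⁰` can be
written `Σ_m η_m(μ) A¹_{μ_m} + μ A⁰`. -/
theorem stmt_3 {Ω : Type*} [Nonempty Ω] (P : Set ℝ) [Nonempty P]
    (d : ℕ) (hd : 1 ≤ d)
    (x : Fin d → Ω) (μs : Fin d → P) (g : P → Ω → ℝ)
    (q : Fin d → Ω → ℝ)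
    (B : Matrix (Fin d) (Fin d) ℝ)
    (hB : ∀ l m, B l m = q m (x l))
    (hBinv : IsUnit B)
    (lam : P → Fin d → ℝ)
    (hlam : ∀ μ l, ∑ m, B l m * lam μ m = g μ (x l))
    (n : ℕ) (hn : 1 ≤ n)
    (L : (Ω → ℝ) →ₗ[ℝ] Matrix (Fin n) (Fin n) ℝ)
    (A1 : P → Matrix (Fin n) (Fin n) ℝ)
    (hA1 : ∀ ν : P, A1 ν = L (fun y => g ν y))
    (M : Fin d → Matrix (Fin n) (Fin n) ℝ)
    (hM : ∀ m : Fin d, M m = L (q m))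
    (γ : Fin d → Fin d → ℝ)
    (hq : ∀ (k : Fin d) (y : Ω), q k y = ∑ l, γ l k * g (μs l) y)
    (η : P → Fin d → ℝ)
    (hη : ∀ (μ : P) (m : Fin d), η μ m = ∑ l, γ m l * lam μ l)
    (A0 : Matrix (Fin n) (Fin n) ℝ) :
    ∀ μ : P,
      (∑ m, lam μ m • M m = ∑ m, η μ m • A1 (μs m)) ∧
      (∑ m, lam μ m • M m + (μ : ℝ) • A0 =
        ∑ m, η μ m • A1 (μs m) + (μ : ℝ) • A0) := by
  intro μ
  have key : ∑ m, lam μ m • M m = ∑ m, η μ m • A1 (μs m) := by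
    have hM' : ∀ m : Fin d, M m = ∑ l, γ l m • A1 (μs l) := by
      intro m
      rw [hM m]
      have : q m = ∑ l, γ l m • (fun y => g (μs l) y) := by
        funext y
        simpa using hq m y
      rw [this, map_sum]
      simp [hA1]
    calc ∑ m, lam μ m • M m
        = ∑ m, ∑ l, (γ l m * lam μ m) • A1 (μs l) := by
          simp [hM', Finset.smul_sum, smul_smul, mul_comm]
      _ = ∑ l, (∑ m, γ l m * lam μ m) • A1 (μs l) := by
          rw [Finset.sum_comm]
          simp [Finset.sum_smul]
      _ = ∑ l, η μ l • A1 (μs l) := by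
          simp [hη]
  exact ⟨key, by rw [key]⟩
end

section
/- (Exact nonintrusive separated representation.) If for every 1 ≤ p ≤ d_max the function z_p : P → ℝ lies in the linear span of q^z_1, …, q^z_{d^z}, then for every μ ∈ P, A_μ = Σ_{m=1}^{d^z} β_m(μ) A_{μ^z_m}; i.e. the parameter-dependent matrix is exactly a linear combination of its snapshots at the selected parameters μ^z_1,…,μ^z_{d^z}. -/
/-- Exact nonintrusive separated representation: if every coefficient function `z_p`
lies in the span of the `q^z` functions, then `A_μ = Σ_m β_m(μ) A_{μ^z_m}`. -/
theorem stmt_9 {P : Type*} [Nonempty P]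
    (dmax : ℕ) (hdmax : 1 ≤ dmax) (n : ℕ) (hn : 1 ≤ n)
    (z : Fin dmax → P → ℝ)
    (T : Fin dmax → Matrix (Fin n) (Fin n) ℝ)
    (A : P → Matrix (Fin n) (Fin n) ℝ)
    (hA : ∀ ν : P, A ν = ∑ p, z p ν • T p)
    (dz : ℕ) (hdz : 1 ≤ dz)
    (qz : Fin dz → P → ℝ) (μz : Fin dz → P)
    (Bz : Matrix (Fin dz) (Fin dz) ℝ)
    (hBz : ∀ m l, Bz m l = qz l (μz m))
    (hBzinv : IsUnit Bz)
    (β : P → Fin dz → ℝ)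
    (hβ : ∀ (μ : P) (l : Fin dz), ∑ m, Bz m l * β μ m = qz l μ)
    (hspan : ∀ p : Fin dmax, z p ∈ Submodule.span ℝ (Set.range qz)) :
    ∀ μ : P, A μ = ∑ m, β μ m • A (μz m) := by
  intro μ
  have key : ∀ p : Fin dmax, z p μ = ∑ m, β μ m * z p (μz m) := by
    intro p
    obtain ⟨c, hc⟩ := (Finsupp.mem_span_range_iff_exists_finsupp).mp (hspan p)
    have hz : ∀ ν, z p ν = ∑ l, c l * qz l ν := by
      intro ν
      rw [← hc]
      simp [Finsupp.sum_fintype, Finsupp.sum_apply]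
    calc z p μ = ∑ l, c l * qz l μ := hz μ
      _ = ∑ l, c l * ∑ m, Bz m l * β μ m := by simp [hβ]
      _ = ∑ m, β μ m * ∑ l, c l * qz l (μz m) := by
          simp_rw [Finset.mul_sum]
          rw [Finset.sum_comm]
          exact Finset.sum_congr rfl fun m _ => Finset.sum_congr rfl fun l _ => by
            rw [hBz]; ring
      _ = ∑ m, β μ m * z p (μz m) := by
          exact Finset.sum_congr rfl fun m _ => by rw [hz]
  rw [hA]
  calc (∑ p, z p μ • T p) = ∑ p, (∑ m, β μ m * z p (μz m)) • T p := by
        exact Finset.sum_congr rfl fun p _ => by rw [key]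
      _ = ∑ p, ∑ m, (β μ m * z p (μz m)) • T p := by
        exact Finset.sum_congr rfl fun p _ => Finset.sum_smul
      _ = ∑ m, ∑ p, (β μ m * z p (μz m)) • T p := Finset.sum_comm
      _ = ∑ m, β μ m • A (μz m) := by
        exact Finset.sum_congr rfl fun m _ => by
          rw [hA, Finset.smul_sum]
          exact Finset.sum_congr rfl fun p _ => mul_smul _ _ _
end

section
/- (Structure of the EIM under the greedy recursion.) Assume the recursive EIM construction is well defined: r_1 := g(μ_1, x_1) ≠ 0 and q_1 := g(μ_1,·)/r_1; and, for each 1 ≤ k < d, assuming the k×k matrix B_k := (q_m(x_l))_{1≤l,m≤k} is invertible, the level-k interpolant is (I_k g)(μ,x) := Σ_{m=1}^k λ^{(k)}_m(μ) q_m(x), where λ^{(k)}(μ) solves Σ_{m=1}^k (B_k)_{l,m} λ^{(k)}_m(μ) = g(μ, x_l) for 1 ≤ l ≤ k; the residual r_{k+1} := g(μ_{k+1}, x_{k+1}) − (I_k g)(μ_{k+1}, x_{k+1}) is nonzero, and q_{k+1} := ( g(μ_{k+1},·) − (I_k g)(μ_{k+1},·) ) / r_{k+1}. Then for every 1 ≤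 k ≤ d: (i) q_m(x_l) = 0 whenever l < m ≤ k and q_m(x_m) = 1 for every m ≤ k, so that B_k is lower triangular with unit diagonal, has determinant 1, and is invertible; and (ii) the interpolant matches g at the selected points: (I_k g)(μ, x_l) = g(μ, x_l) for every μ ∈ P and every 1 ≤ l ≤ k. -/
/-- Structure of the EIM under the greedy recursion (0-indexed): for every level
`1 ≤ k ≤ d`, the basis functions satisfy `q_m(x_l) = 0` for `l < m < k` and
`q_m(x_m) = 1` for `m < k`, so that the interpolation matrix `B_k` is lower triangular
with unit diagonal, has determinant `1`, and is invertible; moreover the level-`k`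
interpolant matches `g` at the selected points. -/
theorem stmt_10 {Ω P : Type*} [Nonempty Ω] [Nonempty P]
    (g : P → Ω → ℝ) (d : ℕ) (hd : 1 ≤ d)
    (x : ℕ → Ω) (μs : ℕ → P)
    (q : ℕ → Ω → ℝ) (r : ℕ → ℝ)
    (lam : ℕ → P → ℕ → ℝ) (Ik : ℕ → P → Ω → ℝ)
    -- initialization of the recursion
    (hr0 : r 0 = g (μs 0) (x 0))
    (hr0ne : r 0 ≠ 0)
    (hq0 : ∀ y : Ω, q 0 y = g (μs 0) y / r 0)
    -- the level-k interpolant, with coefficients solving the interpolation system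
    (hIk : ∀ (k : ℕ) (μ : P) (y : Ω),
      Ik k μ y = ∑ m ∈ Finset.range k, lam k μ m * q m y)
    (hlam : ∀ k, 1 ≤ k → k ≤ d → ∀ (μ : P), ∀ l < k,
      ∑ m ∈ Finset.range k, q m (x l) * lam k μ m = g μ (x l))
    -- the greedy recursion defining the residuals and next basis functions
    (hrec : ∀ k, 1 ≤ k → k < d →
      r k = g (μs k) (x k) - Ik k (μs k) (x k) ∧
      r k ≠ 0 ∧
      ∀ y : Ω, q k y = (g (μs k) y - Ik k (μs k) y) / r k) :
    ∀ k, 1 ≤ k → k ≤ d →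
      (∀ l m : ℕ, l < m → m < k → q m (x l) = 0) ∧
      (∀ m < k, q m (x m) = 1) ∧
      (Matrix.of (fun l m : Fin k => q (m : ℕ) (x (l : ℕ)))).det = 1 ∧
      IsUnit (Matrix.of (fun l m : Fin k => q (m : ℕ) (x (l : ℕ)))) ∧
      (∀ μ : P, ∀ l < k, Ik k μ (x l) = g μ (x l)) := by
  -- (ii) holds directly from hIk and hlam
  have hmatch : ∀ k, 1 ≤ k → k ≤ d → ∀ μ : P, ∀ l < k, Ik k μ (x l) = g μ (x l) := by
    intro k hk1 hkd μ l hl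
    rw [hIk]
    rw [← hlam k hk1 hkd μ l hl]
    exact Finset.sum_congr rfl fun m _ => mul_comm _ _
  -- (i) zero and one entries
  have hzero : ∀ m, m < d → ∀ l, l < m → q m (x l) = 0 := by
    intro m hm l hl
    have hm1 : 1 ≤ m := Nat.one_le_iff_ne_zero.mpr (by omega)
    obtain ⟨hr, hrne, hq⟩ := hrec m hm1 hm
    rw [hq, hmatch m hm1 (le_of_lt hm) (μs m) l hl, sub_self, zero_div]
  have hone : ∀ m, m < d → q m (x m) = 1 := by
    intro m hm
    rcases Nat.eq_zero_or_pos m with h0 | hpos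
    · subst h0
      rw [hq0, ← hr0, div_self hr0ne]
    · obtain ⟨hr, hrne, hq⟩ := hrec m hpos hm
      rw [hq, ← hr, div_self hrne]
  intro k hk1 hkd
  refine ⟨fun l m hlm hmk => hzero m (by omega) l hlm,
          fun m hmk => hone m (by omega), ?_, ?_, hmatch k hk1 hkd⟩
  · have hdet : (Matrix.of (fun l m : Fin k => q (m : ℕ) (x (l : ℕ)))).det =
        ∏ i : Fin k, q (i : ℕ) (x (i : ℕ)) := by
      apply Matrix.det_of_lowerTriangular
      intro i j hij
      exact hzero j (by omega) i (by exact_mod_cast hij)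
    rw [hdet]
    exact Finset.prod_eq_one fun i _ => hone i (lt_of_lt_of_le i.isLt hkd)
  · rw [Matrix.isUnit_iff_isUnit_det]
    have hdet : (Matrix.of (fun l m : Fin k => q (m : ℕ) (x (l : ℕ)))).det =
        ∏ i : Fin k, q (i : ℕ) (x (i : ℕ)) := by
      apply Matrix.det_of_lowerTriangular
      intro i j hij
      exact hzero j (by omega) i (by exact_mod_cast hij)
    have h1 : (∏ i : Fin k, q (i : ℕ) (x (i : ℕ))) = 1 :=
      Finset.prod_eq_one fun i _ => hone i (lt_of_lt_of_le i.isLt hkd)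
    rw [hdet, h1]
    exact isUnit_one
end

section
/- (Span equality for the EIM basis.) Under the recursive EIM construction (r_1 := g(μ_1, x_1) ≠ 0, q_1 := g(μ_1,·)/r_1, and for 1 ≤ k < d, with B_k := (q_m(x_l))_{1≤l,m≤k} invertible and (I_k g) the associated level-k interpolant, r_{k+1} := g(μ_{k+1}, x_{k+1}) − (I_k g)(μ_{k+1}, x_{k+1}) ≠ 0 and q_{k+1} := ( g(μ_{k+1},·) − (I_k g)(μ_{k+1},·) ) / r_{k+1}), for every 1 ≤ k ≤ d the linear span of q_1, …, q_k equals the linear span of g(μ_1,·), …, g(μ_k,·) in the space of functions Ω → ℝ. -/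
/-- Span equality for the EIM basis (0-indexed): under the greedy recursion, for every
`1 ≤ k ≤ d`, the span of `q_0, …, q_{k-1}` equals the span of the snapshots
`g(μ_0,·), …, g(μ_{k-1},·)` in the space of functions `Ω → ℝ`. -/
theorem stmt_11 {Ω P : Type*} [Nonempty Ω] [Nonempty P]
    (g : P → Ω → ℝ) (d : ℕ) (hd : 1 ≤ d)
    (x : ℕ → Ω) (μs : ℕ → P)
    (q : ℕ → Ω → ℝ) (r : ℕ → ℝ)
    (lam : ℕ → P → ℕ → ℝ) (Ik : ℕ → P → Ω → ℝ)
    -- initialization of the recursion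
    (hr0 : r 0 = g (μs 0) (x 0))
    (hr0ne : r 0 ≠ 0)
    (hq0 : ∀ y : Ω, q 0 y = g (μs 0) y / r 0)
    -- the level-k interpolant, with coefficients solving the interpolation system
    (hIk : ∀ (k : ℕ) (μ : P) (y : Ω),
      Ik k μ y = ∑ m ∈ Finset.range k, lam k μ m * q m y)
    (hlam : ∀ k, 1 ≤ k → k ≤ d → ∀ (μ : P), ∀ l < k,
      ∑ m ∈ Finset.range k, q m (x l) * lam k μ m = g μ (x l))
    -- invertibility of the level-k interpolation matrices
    (hBk : ∀ k, 1 ≤ k → k ≤ d →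
      IsUnit (Matrix.of (fun l m : Fin k => q (m : ℕ) (x (l : ℕ)))))
    -- the greedy recursion defining the residuals and next basis functions
    (hrec : ∀ k, 1 ≤ k → k < d →
      r k = g (μs k) (x k) - Ik k (μs k) (x k) ∧
      r k ≠ 0 ∧
      ∀ y : Ω, q k y = (g (μs k) y - Ik k (μs k) y) / r k) :
    ∀ k, 1 ≤ k → k ≤ d →
      Submodule.span ℝ (q '' Set.Iio k) =
        Submodule.span ℝ ((fun i => g (μs i)) '' Set.Iio k) := by
  intro k hk hkd
  induction k with
  | zero => omega
  | succ n ih =>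
    rcases Nat.eq_zero_or_pos n with h0 | hn
    · subst h0
      have h1 : Set.Iio 1 = ({0} : Set ℕ) := by
        ext a; simp [Nat.lt_one_iff]
      rw [h1, Set.image_singleton, Set.image_singleton]
      have hq0' : q 0 = (r 0)⁻¹ • g (μs 0) := by
        funext y
        simp [hq0 y, div_eq_inv_mul]
      have hg0 : g (μs 0) = r 0 • q 0 := by
        funext y
        simp only [Pi.smul_apply, smul_eq_mul]
        rw [hq0 y]
        field_simp
      apply le_antisymm
      · rw [Submodule.span_le]
        intro v hv
        simp only [Set.mem_singleton_iff] at hv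
        subst hv
        rw [hq0']
        exact Submodule.smul_mem _ _ (Submodule.mem_span_singleton_self _)
      · rw [Submodule.span_le]
        intro v hv
        simp only [Set.mem_singleton_iff] at hv
        subst hv
        rw [hg0]
        exact Submodule.smul_mem _ _ (Submodule.mem_span_singleton_self _)
    · have ihn := ih hn (by omega)
      obtain ⟨hrn, hrne, hqn⟩ := hrec n hn (by omega)
      have hqn' : q n = (r n)⁻¹ • (g (μs n) - Ik n (μs n)) := by
        funext y
        simp [hqn y, div_eq_inv_mul]
      have hgn : g (μs n) = r n • q n + Ik n (μs n) := by
        funext y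
        simp only [Pi.add_apply, Pi.smul_apply, smul_eq_mul]
        rw [hqn y]
        field_simp
        ring
      have hIk' : Ik n (μs n) = ∑ m ∈ Finset.range n, lam n (μs n) m • q m := by
        funext y
        rw [hIk]
        simp
      have hIkmem : Ik n (μs n) ∈ Submodule.span ℝ (q '' Set.Iio n) := by
        rw [hIk']
        exact Submodule.sum_mem _ fun m hm => Submodule.smul_mem _ _
          (Submodule.subset_span ⟨m, Finset.mem_range.mp hm, rfl⟩)
      have hsub : Set.Iio n ⊆ Set.Iio (n + 1) := fun a ha => Nat.lt_succ_of_lt ha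
      apply le_antisymm
      · rw [Submodule.span_le]
        rintro _ ⟨m, hm, rfl⟩
        rcases Nat.lt_succ_iff_lt_or_eq.mp hm with hm' | rfl
        · have : q m ∈ Submodule.span ℝ (q '' Set.Iio n) :=
            Submodule.subset_span ⟨m, hm', rfl⟩
          rw [ihn] at this
          exact Submodule.span_mono (Set.image_mono hsub) this
        · rw [hqn']
          refine Submodule.smul_mem _ _ (Submodule.sub_mem _ ?_ ?_)
          · exact Submodule.subset_span ⟨m, Nat.lt_succ_self m, rfl⟩
          · rw [ihn] at hIkmem
            exact Submodule.span_mono (Set.image_mono hsub) hIkmem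
      · rw [Submodule.span_le]
        rintro _ ⟨m, hm, rfl⟩
        rcases Nat.lt_succ_iff_lt_or_eq.mp hm with hm' | rfl
        · have : g (μs m) ∈ Submodule.span ℝ ((fun i => g (μs i)) '' Set.Iio n) :=
            Submodule.subset_span ⟨m, hm', rfl⟩
          rw [← ihn] at this
          exact Submodule.span_mono (Set.image_mono hsub) this
        · show g (μs m) ∈ _
          rw [hgn]
          refine Submodule.add_mem _ (Submodule.smul_mem _ _ ?_) ?_
          · exact Submodule.subset_span ⟨m, Nat.lt_succ_self m, rfl⟩
          · exact Submodule.span_mono (Set.image_mono hsub) hIkmem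
end
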